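/- arXiv:1912.09933 — 9 statements merged into one kernel-verified Lean document; each statement's English description precedes it below -/
import Mathlib

section
/- Let A be a finite set of players with at least two elements and let v be a nondecreasing coalitional value function on A with v(C) = 0 whenever C has at most one element. Let ε* ∈ ℝ be the least-core value of v, i.e., K(v,ε*) ≠ ∅ and K(v,ε) = ∅ for every ε < ε*. Then every allocation β in the least-core K(v,ε*) satisfies β_a ≥ 0 for all a ∈ A. -/
/-- The strong ε-core of a coalitional game with value function `v`. -/
def eCore {α : Type*} [Fintype α] [DecidableEq α] (v : Finset α → ℝ) (ε : ℝ) :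
    Set (α → ℝ) :=
  {β | ∑ a, β a = v Finset.univ ∧
    ∀ C : Finset α, C.Nonempty → C ≠ Finset.univ → v C - ε ≤ ∑ a ∈ C, β a}

/-- For a nondecreasing coalitional value function, every allocation in the
least-core is componentwise nonnegative. -/
theorem stmt1 {α : Type*} [Fintype α] [DecidableEq α]
    (v : Finset α → ℝ)
    (hcard : 2 ≤ Fintype.card α)
    (hmono : ∀ C' C : Finset α, C' ⊆ C → v C' ≤ v C)
    (hzero : ∀ C : Finset α, C.card ≤ 1 → v C = 0)
    (εstar : ℝ)
    (hne : (eCore v εstar).Nonempty)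
    (hleast : ∀ ε : ℝ, ε < εstar → eCore v ε = ∅) :
    ∀ β ∈ eCore v εstar, ∀ a : α, 0 ≤ β a := by
  intro β hβ a
  by_contra hneg
  push_neg at hneg
  obtain ⟨hsum, hcons⟩ := hβ
  have hn : (2:ℝ) ≤ (Fintype.card α : ℝ) := by exact_mod_cast hcard
  set m : ℝ := (Fintype.card α : ℝ) - 1 with hmdef
  have hm1 : (1:ℝ) ≤ m := by simp [hmdef]; linarith
  have hm0 : (0:ℝ) < m := by linarith
  set δ : ℝ := -β a / 2 with hδdef
  have hδ : 0 < δ := by simp [hδdef]; linarith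
  have h2δ : 2 * δ = -β a := by simp [hδdef]; ring
  have hsa : ({a} : Finset α) ≠ Finset.univ := by
    intro h
    have h1 : ({a} : Finset α).card = Fintype.card α := by
      rw [h, Finset.card_univ]
    simp at h1
    omega
  have hεstar : 2 * δ ≤ εstar := by
    have h := hcons {a} (Finset.singleton_nonempty a) hsa
    rw [hzero {a} (by simp)] at h
    simp at h
    linarith
  set η : ℝ := δ / m with hηdef
  have hη : 0 < η := div_pos hδ hm0
  have hmη : m * η = δ := by
    rw [hηdef]; field_simp
  set β' : α → ℝ := fun b => β b - η + (if b = a then δ + η else 0) with hβ'def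
  have hsumC : ∀ C : Finset α, ∑ b ∈ C, β' b =
      (∑ b ∈ C, β b) - C.card * η + (if a ∈ C then δ + η else 0) := by
    intro C
    rw [hβ'def]
    rw [Finset.sum_add_distrib, Finset.sum_sub_distrib, Finset.sum_ite_eq' C a (fun _ => δ + η)]
    simp [mul_comm]
  have hcardlt : ∀ C : Finset α, C ≠ Finset.univ → (C.card : ℝ) ≤ m := by
    intro C hC
    have : C.card < Fintype.card α := by
      have : C ⊂ Finset.univ := Finset.ssubset_univ_iff.mpr hC
      simpa [Finset.card_univ] using Finset.card_lt_card this
    rw [hmdef]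
    have : (C.card : ℝ) + 1 ≤ (Fintype.card α : ℝ) := by exact_mod_cast this
    linarith
  have key : β' ∈ eCore v (εstar - η) := by
    constructor
    · rw [hsumC Finset.univ]
      simp only [Finset.mem_univ, if_true, Finset.card_univ]
      have hc : (Fintype.card α : ℝ) * η = δ + η := by rw [← hmη, hmdef]; ring
      rw [hc]
      linarith [hsum]
    · intro C hCne hCuniv
      rw [hsumC C]
      have hk := hcardlt C hCuniv
      by_cases haC : a ∈ C
      · simp only [haC, if_true]
        have h := hcons C hCne hCuniv
        have : (C.card : ℝ) * η ≤ m * η := by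
          apply mul_le_mul_of_nonneg_right hk (le_of_lt hη)
        rw [hmη] at this
        linarith
      · simp only [haC, if_false, add_zero]
        have hCβ : v C - εstar + 2 * δ ≤ ∑ b ∈ C, β b := by
          by_cases hD : insert a C = Finset.univ
          · have : ∑ b ∈ insert a C, β b = v Finset.univ := by rw [hD, ← hsum]
            rw [Finset.sum_insert haC] at this
            have hvC : v C ≤ v Finset.univ := hmono C Finset.univ (Finset.subset_univ C)
            linarith [h2δ, hεstar]
          · have hDne : (insert a C).Nonempty := Finset.insert_nonempty a C
            have h := hcons (insert a C) hDne hD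
            rw [Finset.sum_insert haC] at h
            have hvC : v C ≤ v (insert a C) :=
              hmono C (insert a C) (Finset.subset_insert a C)
            linarith [h2δ]
        have : (C.card : ℝ) * η ≤ m * η := by
          apply mul_le_mul_of_nonneg_right hk (le_of_lt hη)
        rw [hmη] at this
        have hηδ : η ≤ δ := by
          rw [hηdef, div_le_iff₀ hm0]
          nlinarith
        linarith
  have hlt : εstar - η < εstar := by linarith
  rw [hleast (εstar - η) hlt] at key
  exact key
end

section
/- Let A be a finite set of players with at least two elements and let v be a nondecreasing coalitional value function on A with v(C) = 0 whenever C has at most one element. Suppose ε ∈ ℝ and β ∈ K(v,ε) is an allocation with β_{a'} < 0 for some player a' ∈ A. Then there exists δ > 0 such that K(v, ε − δ) is nonempty. -/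
/-- For a nondecreasing coalitional value function, if some allocation in the
strong ε-core gives a negative benefit to a player, then the strong (ε-δ)-core
is nonempty for some δ > 0. -/
theorem stmt2 {α : Type*} [Fintype α] [DecidableEq α]
    (v : Finset α → ℝ)
    (hcard : 2 ≤ Fintype.card α)
    (hmono : ∀ C' C : Finset α, C' ⊆ C → v C' ≤ v C)
    (hzero : ∀ C : Finset α, C.card ≤ 1 → v C = 0)
    (ε : ℝ) (β : α → ℝ) (hβ : β ∈ eCore v ε)
    (a' : α) (hneg : β a' < 0) :
    ∃ δ : ℝ, 0 < δ ∧ (eCore v (ε - δ)).Nonempty := by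
  obtain ⟨hsum, hcons⟩ := hβ
  have hn1 : (1:ℝ) ≤ (Fintype.card α : ℝ) - 1 := by
    have : (2:ℝ) ≤ (Fintype.card α : ℝ) := by exact_mod_cast hcard
    linarith
  have hn1pos : (0:ℝ) < (Fintype.card α : ℝ) - 1 := by linarith
  set t : ℝ := β a' / ((Fintype.card α : ℝ) - 1) with ht
  have htneg : t < 0 := div_neg_of_neg_of_pos hneg hn1pos
  have htval : ((Fintype.card α : ℝ) - 1) * t = β a' := by
    rw [ht, mul_div_cancel₀ _ (ne_of_gt hn1pos)]
  -- singleton constraint gives ε bound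
  have hsingle : v {a'} - ε ≤ β a' := by
    have h1 : ({a'} : Finset α) ≠ Finset.univ := by
      intro h
      have : Fintype.card α = 1 := by
        rw [← Finset.card_univ, ← h, Finset.card_singleton]
      omega
    simpa using hcons {a'} ⟨a', Finset.mem_singleton_self a'⟩ h1
  have hv1 : v {a'} = 0 := hzero _ (by simp)
  have hεβ : -β a' ≤ ε := by rw [hv1] at hsingle; linarith
  have htε : -t ≤ ε := by
    have : β a' ≤ t := by nlinarith [htval]
    linarith
  refine ⟨-t, by linarith, fun a => if a = a' then 0 else β a + t, ?_, ?_⟩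
  · -- sum condition
    have hmem : a' ∈ (Finset.univ : Finset α) := Finset.mem_univ a'
    rw [← Finset.sum_erase_add _ _ hmem]
    have h1 : ∑ a ∈ Finset.univ.erase a', (if a = a' then 0 else β a + t)
        = ∑ a ∈ Finset.univ.erase a', (β a + t) := by
      apply Finset.sum_congr rfl
      intro a ha
      rw [if_neg (Finset.ne_of_mem_erase ha)]
    rw [h1, if_pos rfl, add_zero, Finset.sum_add_distrib, Finset.sum_const,
      nsmul_eq_mul]
    have hcarde : (Finset.univ.erase a').card = Fintype.card α - 1 := by
      rw [Finset.card_erase_of_mem hmem, Finset.card_univ]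
    have hcaste : ((Finset.univ.erase a').card : ℝ) = (Fintype.card α : ℝ) - 1 := by
      rw [hcarde]
      have : 1 ≤ Fintype.card α := by omega
      push_cast [this]
      ring
    rw [hcaste, htval]
    have he : ∑ a ∈ Finset.univ.erase a', β a = ∑ a, β a - β a' := by
      rw [← Finset.sum_erase_add _ _ hmem]; ring
    rw [he, hsum]; ring
  · intro C hC hCne
    have hClt : C.card < Fintype.card α := by
      rw [← Finset.card_univ]
      exact Finset.card_lt_card (Finset.ssubset_univ_iff.mpr hCne)
    have hsplit : ∀ D : Finset α, a' ∉ D →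
        ∑ a ∈ D, (if a = a' then 0 else β a + t) = ∑ a ∈ D, β a + D.card * t := by
      intro D hD
      have : ∑ a ∈ D, (if a = a' then 0 else β a + t) = ∑ a ∈ D, (β a + t) := by
        apply Finset.sum_congr rfl
        intro a ha
        rw [if_neg (ne_of_mem_of_not_mem ha hD)]
      rw [this, Finset.sum_add_distrib, Finset.sum_const, nsmul_eq_mul]
    by_cases hmem : a' ∈ C
    · -- a' ∈ C
      have herase : a' ∉ C.erase a' := Finset.notMem_erase a' C
      rw [← Finset.sum_erase_add _ _ hmem, hsplit _ herase, if_pos rfl, add_zero]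
      have hsumC : ∑ a ∈ C.erase a', β a = ∑ a ∈ C, β a - β a' := by
        rw [← Finset.sum_erase_add _ _ hmem]; ring
      have hconsC := hcons C hC hCne
      have hcarde : (C.erase a').card = C.card - 1 := Finset.card_erase_of_mem hmem
      have hcpos : 1 ≤ C.card := Finset.card_pos.mpr hC
      have hcaste : ((C.erase a').card : ℝ) = (C.card : ℝ) - 1 := by
        rw [hcarde]; push_cast [hcpos]; ring
      rw [hsumC, hcaste]
      -- need: v C - (ε - -t) ≤ ∑_C β - β a' + (c-1) t
      have hcle : (C.card : ℝ) ≤ (Fintype.card α : ℝ) - 1 := by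
        have : C.card ≤ Fintype.card α - 1 := by omega
        have h2 : ((C.card : ℝ)) ≤ ((Fintype.card α - 1 : ℕ) : ℝ) := by
          exact_mod_cast this
        have : ((Fintype.card α - 1 : ℕ) : ℝ) = (Fintype.card α : ℝ) - 1 := by
          have : 1 ≤ Fintype.card α := by omega
          push_cast [this]; ring
        linarith
      nlinarith [hconsC]
    · -- a' ∉ C
      rw [hsplit _ hmem]
      by_cases hins : insert a' C = Finset.univ
      · -- C = univ \ {a'}
        have hcC : (C.card : ℝ) = (Fintype.card α : ℝ) - 1 := by
          have h1 : C.card + 1 = Fintype.card α := by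
            rw [← Finset.card_univ, ← hins, Finset.card_insert_of_notMem hmem]
          have : ((C.card : ℕ) : ℝ) + 1 = (Fintype.card α : ℝ) := by exact_mod_cast h1
          linarith
        have hsC : ∑ a ∈ C, β a = v Finset.univ - β a' := by
          have : ∑ a, β a = β a' + ∑ a ∈ C, β a := by
            rw [← hins, Finset.sum_insert hmem]
          linarith [hsum]
        have hvle : v C ≤ v Finset.univ := hmono _ _ (Finset.subset_univ C)
        rw [hsC, hcC, ← htval]
        nlinarith
      · -- insert a' C is a proper coalition
        have hinsne : (insert a' C).Nonempty := Finset.insert_nonempty _ _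
        have hconsI := hcons _ hinsne hins
        have hsI : ∑ a ∈ insert a' C, β a = β a' + ∑ a ∈ C, β a :=
          Finset.sum_insert hmem
        have hvle : v C ≤ v (insert a' C) := hmono _ _ (Finset.subset_insert _ _)
        have hcle : (C.card : ℝ) ≤ (Fintype.card α : ℝ) - 2 := by
          have h1 : (insert a' C).card < Fintype.card α := by
            rw [← Finset.card_univ]
            exact Finset.card_lt_card (Finset.ssubset_univ_iff.mpr hins)
          rw [Finset.card_insert_of_notMem hmem] at h1
          have : C.card + 2 ≤ Fintype.card α := by omega
          have h2 : ((C.card : ℝ)) + 2 ≤ (Fintype.card α : ℝ) := by exact_mod_cast this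
          linarith
        rw [← htval] at hsI
        nlinarith [hconsI, hsI]
end

section
/- Let A be a finite set of players with at least two elements and let v be a coalitional value function on A with v(C) = 0 whenever C has at most one element. Suppose a' ∈ A is a dummy player, i.e., v(C) − v(C \ {a'}) = 0 for every subset C ⊆ A, and let ε* ∈ ℝ be the least-core value of v (K(v,ε*) ≠ ∅ and K(v,ε) = ∅ for every ε < ε*). Then every allocation β in the least-core K(v,ε*) satisfies β_{a'} = 0. -/
/-- A dummy player receives zero benefit in every least-core allocation. -/
theorem stmt4 {α : Type*} [Fintype α] [DecidableEq α]
    (v : Finset α → ℝ)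
    (hcard : 2 ≤ Fintype.card α)
    (hzero : ∀ C : Finset α, C.card ≤ 1 → v C = 0)
    (a' : α) (hdum : ∀ C : Finset α, v C - v (C.erase a') = 0)
    (εstar : ℝ)
    (hne : (eCore v εstar).Nonempty)
    (hleast : ∀ ε : ℝ, ε < εstar → eCore v ε = ∅) :
    ∀ β ∈ eCore v εstar, β a' = 0 := by
  intro β hβ
  obtain ⟨hsum, hcon⟩ := hβ
  have hdum' : ∀ C : Finset α, v C = v (C.erase a') := fun C => by
    have := hdum C; linarith
  have hmemu : a' ∈ (Finset.univ : Finset α) := Finset.mem_univ a'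
  set t := β a' with htdef
  -- the "players minus dummy" coalition
  have huecard : (Finset.univ.erase a').card = Fintype.card α - 1 := by
    rw [Finset.card_erase_of_mem hmemu, Finset.card_univ]
  have hune : (Finset.univ.erase a').Nonempty := by
    apply Finset.card_pos.mp
    omega
  have hprop : Finset.univ.erase a' ≠ Finset.univ := by
    intro h
    have h2 := Finset.notMem_erase a' (Finset.univ : Finset α)
    rw [h] at h2
    exact h2 hmemu
  have hsingle : ({a'} : Finset α) ≠ Finset.univ := by
    intro h
    have := congrArg Finset.card h
    rw [Finset.card_singleton, Finset.card_univ] at this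
    omega
  -- basic bounds on t and εstar
  have h1 : -εstar ≤ t := by
    have h := hcon {a'} (Finset.singleton_nonempty a') hsingle
    have hv : v {a'} = 0 := hzero _ (by simp)
    rw [hv, Finset.sum_singleton] at h
    linarith
  have hsumerase : t + ∑ a ∈ Finset.univ.erase a', β a = v Finset.univ := by
    rw [Finset.add_sum_erase Finset.univ β hmemu]; exact hsum
  have h2 : t ≤ εstar := by
    have h := hcon _ hune hprop
    have hv : v (Finset.univ.erase a') = v Finset.univ := (hdum' Finset.univ).symm
    rw [hv] at h
    linarith
  have hε0 : 0 ≤ εstar := by linarith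
  -- the real number of non-dummy players
  set m : ℝ := (Fintype.card α : ℝ) - 1 with hmdef
  have hm1 : 1 ≤ m := by
    have : (2 : ℝ) ≤ (Fintype.card α : ℝ) := by exact_mod_cast hcard
    simp only [hmdef]; linarith
  have hmpos : 0 < m := by linarith
  have hcardu : ((Finset.univ.erase a').card : ℝ) = m := by
    rw [huecard, Nat.cast_sub (by omega)]
    simp [hmdef]
  -- generic sum-splitting lemma
  have hsplit : ∀ (d e : ℝ) (C : Finset α),
      ∑ a ∈ C, (if a = a' then β a + d else β a + e)
        = ∑ a ∈ C, β a + ((C.erase a').card : ℝ) * e + (if a' ∈ C then d else 0) := by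
    intro d e C
    have herase : ∑ a ∈ C.erase a', (if a = a' then β a + d else β a + e)
        = ∑ a ∈ C.erase a', β a + ((C.erase a').card : ℝ) * e := by
      rw [Finset.sum_congr rfl (fun a ha => if_neg (Finset.ne_of_mem_erase ha)),
        Finset.sum_add_distrib, Finset.sum_const, nsmul_eq_mul]
    by_cases hC : a' ∈ C
    · rw [← Finset.add_sum_erase C _ hC, ← Finset.add_sum_erase C β hC, herase,
        if_pos hC, if_pos rfl]
      ring
    · rw [Finset.erase_eq_of_notMem hC] at herase
      rw [herase, if_neg hC, Finset.erase_eq_of_notMem hC]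
      ring
  -- main argument
  by_contra ht
  rcases lt_or_gt_of_ne ht with htneg | htpos
  · -- t < 0 : raise the dummy, lower everyone else
    set δ : ℝ := -t / 2 with hδdef
    have hδpos : 0 < δ := by simp only [hδdef]; linarith
    set c : ℝ := δ / m with hcdef
    have hcpos : 0 < c := div_pos hδpos hmpos
    have hcδ : c ≤ δ := div_le_self hδpos.le hm1
    set β' : α → ℝ := fun a => if a = a' then β a + δ else β a + (-(δ / m)) with hβ'def
    have hmem : β' ∈ eCore v (εstar - c) := by
      constructor
      · show ∑ a, β' a = v Finset.univ
        simp only [hβ'def]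
        rw [hsplit, hcardu, if_pos hmemu]
        have hmδ : m * (δ / m) = δ := by field_simp
        linarith
      · intro C hCne hCu
        show v C - (εstar - c) ≤ ∑ a ∈ C, β' a
        simp only [hβ'def]
        rw [hsplit]
        have hClt : C.card < Fintype.card α :=
          Finset.card_lt_card (Finset.ssubset_univ_iff.mpr hCu)
        by_cases hC : a' ∈ C
        · rw [if_pos hC]
          have hce : (C.erase a').card + 1 = C.card := Finset.card_erase_add_one hC
          have hcer : ((C.erase a').card : ℝ) ≤ m - 1 := by
            have : ((C.erase a').card : ℝ) + 2 ≤ (Fintype.card α : ℝ) := by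
              exact_mod_cast (by omega : (C.erase a').card + 2 ≤ Fintype.card α)
            simp only [hmdef]; linarith
          have hbd : ((C.erase a').card : ℝ) * (δ / m) ≤ (m - 1) * (δ / m) :=
            mul_le_mul_of_nonneg_right hcer (by positivity)
          have hkey : (m - 1) * (δ / m) = δ - c := by
            simp only [hcdef]; field_simp
          have hc1 := hcon C hCne hCu
          rw [hkey] at hbd
          linarith
        · rw [if_neg hC, Finset.erase_eq_of_notMem hC]
          have hcer : ((C.card : ℝ)) ≤ m := by
            have : ((C.card : ℝ)) + 1 ≤ (Fintype.card α : ℝ) := by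
              exact_mod_cast (by omega : C.card + 1 ≤ Fintype.card α)
            simp only [hmdef]; linarith
          have hbd : ((C.card : ℝ)) * (δ / m) ≤ m * (δ / m) :=
            mul_le_mul_of_nonneg_right hcer (by positivity)
          have hmδ : m * (δ / m) = δ := by field_simp
          -- show ∑_C β ≥ v C - εstar - t
          have hlow : v C - εstar - t ≤ ∑ a ∈ C, β a := by
            by_cases hins : insert a' C = Finset.univ
            · have hCeq : C = Finset.univ.erase a' := by
                rw [← hins, Finset.erase_insert hC]
              have hv : v C = v Finset.univ := by
                rw [hCeq, ← hdum' Finset.univ]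
              rw [hCeq, ← hsumerase] at hv
              rw [hCeq]
              linarith
            · have hc2 := hcon _ (Finset.insert_nonempty a' C) hins
              have hvi : v (insert a' C) = v C := by
                rw [hdum' (insert a' C), Finset.erase_insert hC]
              rw [hvi, Finset.sum_insert hC] at hc2
              linarith
          have h2δ : -t = 2 * δ := by simp only [hδdef]; ring
          linarith
    rw [hleast (εstar - c) (by linarith)] at hmem
    exact hmem
  · -- t > 0 : lower the dummy, raise everyone else
    set δ : ℝ := t / 2 with hδdef
    have hδpos : 0 < δ := by simp only [hδdef]; linarith
    set c : ℝ := δ / m with hcdef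
    have hcpos : 0 < c := div_pos hδpos hmpos
    have hcδ : c ≤ δ := div_le_self hδpos.le hm1
    set β' : α → ℝ := fun a => if a = a' then β a + (-δ) else β a + δ / m with hβ'def
    have hmem : β' ∈ eCore v (εstar - c) := by
      constructor
      · show ∑ a, β' a = v Finset.univ
        simp only [hβ'def]
        rw [hsplit, hcardu, if_pos hmemu]
        have hmδ : m * (δ / m) = δ := by field_simp
        linarith
      · intro C hCne hCu
        show v C - (εstar - c) ≤ ∑ a ∈ C, β' a
        simp only [hβ'def]
        rw [hsplit]
        by_cases hC : a' ∈ C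
        · rw [if_pos hC]
          have hnn : (0:ℝ) ≤ ((C.erase a').card : ℝ) * (δ / m) :=
            mul_nonneg (Nat.cast_nonneg _) (div_pos hδpos hmpos).le
          by_cases he : (C.erase a').Nonempty
          · have hpe : C.erase a' ≠ Finset.univ := by
              intro h
              have h2 := Finset.notMem_erase a' C
              rw [h] at h2
              exact h2 hmemu
            have hc1 := hcon _ he hpe
            have hvC : v C = v (C.erase a') := hdum' C
            have hsC : t + ∑ a ∈ C.erase a', β a = ∑ a ∈ C, β a :=
              Finset.add_sum_erase C β hC
            have h2δ : t = 2 * δ := by simp only [hδdef]; ring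
            linarith
          · have hCe : C = {a'} := by
              rcases (Finset.erase_eq_empty_iff C a').mp
                (Finset.not_nonempty_iff_eq_empty.mp he) with h | h
              · exact absurd h (Finset.nonempty_iff_ne_empty.mp hCne)
              · exact h
            have hv : v C = 0 := hzero C (by rw [hCe]; simp)
            have hsC : ∑ a ∈ C, β a = t := by rw [hCe, Finset.sum_singleton]
            have h2δ : t = 2 * δ := by simp only [hδdef]; ring
            linarith
        · rw [if_neg hC, Finset.erase_eq_of_notMem hC]
          have h1c : (1:ℝ) ≤ (C.card : ℝ) := by
            exact_mod_cast Finset.card_pos.mpr hCne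
          have hbd : 1 * (δ / m) ≤ ((C.card : ℝ)) * (δ / m) :=
            mul_le_mul_of_nonneg_right h1c (by positivity)
          have hc1 := hcon C hCne hCu
          simp only [hcdef] at *
          linarith
    rw [hleast (εstar - c) (by linarith)] at hmem
    exact hmem
end

section
/- Let A be a finite set of players with at least two elements and let v be a coalitional value function on A with v(C) = 0 whenever C has at most one element. Suppose a' ∈ A is a dummy player (v(C) = v(C \ {a'}) for every C ⊆ A), ε > 0, and β ∈ K(v,ε) satisfies β_{a'} > 0. Then there exists δ > 0 such that K(v, ε − δ) is nonempty. -/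
/-- If ε > 0 and an allocation in the strong ε-core gives strictly positive
benefit to a dummy player, then the strong (ε-δ)-core is nonempty for
some δ > 0. -/
theorem stmt5 {α : Type*} [Fintype α] [DecidableEq α]
    (v : Finset α → ℝ)
    (hcard : 2 ≤ Fintype.card α)
    (hzero : ∀ C : Finset α, C.card ≤ 1 → v C = 0)
    (a' : α) (hdum : ∀ C : Finset α, v C = v (C.erase a'))
    (ε : ℝ) (hε : 0 < ε)
    (β : α → ℝ) (hβ : β ∈ eCore v ε) (hpos : 0 < β a') :
    ∃ δ : ℝ, 0 < δ ∧ (eCore v (ε - δ)).Nonempty := by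
  obtain ⟨hsum, hcon⟩ := hβ
  set n := Fintype.card α with hn
  have hn1 : 1 ≤ n - 1 := by omega
  have hnpos : (0 : ℝ) < (n - 1 : ℕ) := by
    exact_mod_cast Nat.lt_of_lt_of_le Nat.zero_lt_one hn1
  set t : ℝ := β a' / (n - 1 : ℕ) with ht
  have htpos : 0 < t := div_pos hpos hnpos
  set δ := min t ε with hδ
  have hδpos : 0 < δ := lt_min htpos hε
  have hδt : δ ≤ t := min_le_left _ _
  have hδε : δ ≤ ε := min_le_right _ _
  refine ⟨δ, hδpos, fun a => if a = a' then 0 else β a + t, ?_, ?_⟩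
  · -- key computation for any finset
    have key : ∀ C : Finset α,
        (∑ a ∈ C, if a = a' then 0 else β a + t)
          = ∑ a ∈ C.erase a', β a + (C.erase a').card * t := by
      intro C
      have h1 : (∑ a ∈ C, if a = a' then 0 else β a + t)
          = ∑ a ∈ C.erase a', if a = a' then 0 else β a + t := by
        by_cases h : a' ∈ C
        · rw [← Finset.sum_erase_add C _ h, if_pos rfl, add_zero]
        · rw [Finset.erase_eq_of_notMem h]
      rw [h1, Finset.sum_congr rfl (fun a ha => if_neg (Finset.ne_of_mem_erase ha)),
        Finset.sum_add_distrib, Finset.sum_const, nsmul_eq_mul]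
    rw [key]
    have hcardu : (Finset.univ.erase a').card = n - 1 := by
      rw [Finset.card_erase_of_mem (Finset.mem_univ a')]
      rfl
    have : ((Finset.univ.erase a').card : ℝ) * t = β a' := by
      rw [hcardu, ht, mul_div_cancel₀ _ (ne_of_gt hnpos)]
    rw [this, Finset.sum_erase_add _ _ (Finset.mem_univ a'), hsum]
  · intro C hCne hCuniv
    have key : (∑ a ∈ C, if a = a' then 0 else β a + t)
          = ∑ a ∈ C.erase a', β a + (C.erase a').card * t := by
      have h1 : (∑ a ∈ C, if a = a' then 0 else β a + t)
          = ∑ a ∈ C.erase a', if a = a' then 0 else β a + t := by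
        by_cases h : a' ∈ C
        · rw [← Finset.sum_erase_add C _ h, if_pos rfl, add_zero]
        · rw [Finset.erase_eq_of_notMem h]
      rw [h1, Finset.sum_congr rfl (fun a ha => if_neg (Finset.ne_of_mem_erase ha)),
        Finset.sum_add_distrib, Finset.sum_const, nsmul_eq_mul]
    rw [key]
    by_cases hC : C = {a'}
    · subst hC
      simp only [Finset.erase_singleton, Finset.sum_empty, Finset.card_empty,
        Nat.cast_zero, zero_mul, add_zero]
      have : v {a'} = 0 := hzero _ (by simp)
      rw [this]
      linarith
    · have hDne : (C.erase a').Nonempty := by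
        by_cases h : a' ∈ C
        · rw [← Finset.card_pos, Finset.card_erase_of_mem h]
          have h2 : 2 ≤ C.card := by
            rcases Nat.lt_or_ge 1 C.card with h' | h'
            · exact h'
            · exact absurd (Finset.eq_singleton_iff_unique_mem.mpr
                ⟨h, fun x hx => Finset.card_le_one.mp h' x hx a' h⟩) hC
          omega
        · rw [Finset.erase_eq_of_notMem h]; exact hCne
      have hDuniv : C.erase a' ≠ Finset.univ := fun h =>
        (Finset.notMem_erase a' C) (h ▸ Finset.mem_univ a')
      have hb := hcon _ hDne hDuniv
      have hcardD : (1 : ℝ) ≤ (C.erase a').card := by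
        exact_mod_cast Finset.card_pos.mpr hDne
      have : δ ≤ ((C.erase a').card : ℝ) * t :=
        le_trans hδt (le_mul_of_one_le_left (le_of_lt htpos) hcardD)
      have hvC : v C = v (C.erase a') := hdum C
      linarith
end

section
/- Let A be a finite set of players with at least two elements and let v be a coalitional value function on A with v(C) = 0 whenever C has at most one element. Suppose a' ∈ A is a dummy player (v(C) = v(C \ {a'}) for every C ⊆ A), ε > 0, and β ∈ K(v,ε) satisfies β_{a'} < 0. Then there exists δ > 0 such that K(v, ε − δ) is nonempty. -/
/-- If ε > 0 and an allocation in the strong ε-core gives strictly negative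
benefit to a dummy player, then the strong (ε-δ)-core is nonempty for
some δ > 0. -/
theorem stmt6 {α : Type*} [Fintype α] [DecidableEq α]
    (v : Finset α → ℝ)
    (hcard : 2 ≤ Fintype.card α)
    (hzero : ∀ C : Finset α, C.card ≤ 1 → v C = 0)
    (a' : α) (hdum : ∀ C : Finset α, v C = v (C.erase a'))
    (ε : ℝ) (hε : 0 < ε)
    (β : α → ℝ) (hβ : β ∈ eCore v ε) (hneg : β a' < 0) :
    ∃ δ : ℝ, 0 < δ ∧ (eCore v (ε - δ)).Nonempty := by
  classical
  obtain ⟨hsum, hCore⟩ := hβ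
  set n := Fintype.card α with hn
  have hM1 : (1:ℝ) ≤ (n:ℝ) - 1 := by
    have : (2:ℝ) ≤ (n:ℝ) := by exact_mod_cast hcard
    linarith
  set M : ℝ := (n:ℝ) - 1 with hMdef
  have hMpos : 0 < M := by linarith
  set s : ℝ := -β a' with hs
  have hspos : 0 < s := by rw [hs]; linarith
  set t : ℝ := s/2 with ht
  have htpos : 0 < t := by positivity
  set δ : ℝ := t / M with hδ
  have hδpos : 0 < δ := by positivity
  have hMt : M * (t/M) = t := mul_div_cancel₀ t hMpos.ne'
  have hδt : δ ≤ t := by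
    rw [hδ, div_le_iff₀ hMpos]; nlinarith
  set β' : α → ℝ := fun a => if a = a' then β a' + t else β a - t/M with hβ'def
  have hsum_no : ∀ C : Finset α, a' ∉ C →
      ∑ a ∈ C, β' a = ∑ a ∈ C, β a - C.card * (t/M) := by
    intro C hC'
    have h1 : ∀ a ∈ C, β' a = β a - t/M := by
      intro a ha
      have hne : a ≠ a' := fun h => hC' (h ▸ ha)
      simp [hβ'def, hne]
    rw [Finset.sum_congr rfl h1, Finset.sum_sub_distrib, Finset.sum_const, nsmul_eq_mul]
  have hsum_yes : ∀ C : Finset α, a' ∈ C →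
      ∑ a ∈ C, β' a = ∑ a ∈ C, β a + t - ((C.card : ℝ) - 1) * (t/M) := by
    intro C hC'
    have hcpos : 1 ≤ C.card := Finset.card_pos.mpr ⟨a', hC'⟩
    have hβ'a : β' a' = β a' + t := by simp [hβ'def]
    rw [← Finset.sum_erase_add C β' hC', ← Finset.sum_erase_add C β hC',
        hsum_no _ (Finset.notMem_erase _ _), hβ'a,
        Finset.card_erase_of_mem hC', Nat.cast_sub hcpos]
    push_cast
    ring
  -- slack for coalitions not containing a'
  have hslack : ∀ C : Finset α, C.Nonempty → C ≠ Finset.univ → a' ∉ C →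
      v C - ε + s ≤ ∑ a ∈ C, β a := by
    intro C hne hnu hC'
    by_cases hins : insert a' C = Finset.univ
    · have hCeq : C = Finset.univ.erase a' := by
        rw [← hins, Finset.erase_insert hC']
      have h1 : ∑ a ∈ Finset.univ.erase a', β a + β a' = ∑ a, β a :=
        Finset.sum_erase_add _ _ (Finset.mem_univ a')
      have h3 : v (Finset.univ.erase a') = v Finset.univ := (hdum Finset.univ).symm
      rw [hCeq, h3, hs]
      linarith [h1, hsum]
    · have hDne : (insert a' C).Nonempty := ⟨a', Finset.mem_insert_self _ _⟩
      have h1 := hCore (insert a' C) hDne hins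
      have h2 : v (insert a' C) = v C := by
        rw [hdum (insert a' C), Finset.erase_insert hC']
      rw [h2, Finset.sum_insert hC'] at h1
      rw [hs]
      linarith
  refine ⟨δ, hδpos, β', ?_, ?_⟩
  · -- total sum
    have h1 := hsum_yes Finset.univ (Finset.mem_univ a')
    rw [Finset.card_univ, ← hn] at h1
    rw [h1, hsum]
    have : ((n:ℝ) - 1) * (t/M) = t := by rw [← hMdef]; exact hMt
    rw [this]; ring
  · intro C hne hnu
    have hcardC : (C.card : ℝ) ≤ M := by
      have hlt : C.card < n := by
        rw [hn, ← Finset.card_univ]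
        exact Finset.card_lt_card (Finset.ssubset_univ_iff.mpr hnu)
      have : (C.card : ℝ) + 1 ≤ (n : ℝ) := by exact_mod_cast hlt
      rw [hMdef]; linarith
    have htM : 0 < t / M := by positivity
    by_cases h : a' ∈ C
    · rw [hsum_yes C h]
      have hb := hCore C hne hnu
      have : ((C.card : ℝ) - 1) * (t/M) ≤ (M - 1) * (t/M) := by
        apply mul_le_mul_of_nonneg_right (by linarith) htM.le
      nlinarith
    · rw [hsum_no C h]
      have hb := hslack C hne hnu h
      have : (C.card : ℝ) * (t/M) ≤ M * (t/M) := by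
        apply mul_le_mul_of_nonneg_right hcardC htM.le
      nlinarith
end

section
/- Let A be a finite set of players with at least two elements and let v be a coalitional value function on A with v(C) = 0 whenever C has at most one element. Then the set E = {ε ∈ ℝ | K(v,ε) ≠ ∅} is nonempty and bounded below, and it has a minimum element ε*(v); consequently the least-core K(v, ε*(v)) is well-defined and nonempty. -/
/-- The set of ε for which the strong ε-core is nonempty is nonempty, bounded
below, and has a minimum element ε*; hence the least-core is well-defined and
nonempty. -/
theorem stmt10 {α : Type*} [Fintype α] [DecidableEq α]
    (v : Finset α → ℝ)
    (hcard : 2 ≤ Fintype.card α)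
    (hzero : ∀ C : Finset α, C.card ≤ 1 → v C = 0) :
    ({ε : ℝ | (eCore v ε).Nonempty}).Nonempty ∧
      BddBelow {ε : ℝ | (eCore v ε).Nonempty} ∧
      ∃ εstar : ℝ, IsLeast {ε : ℝ | (eCore v ε).Nonempty} εstar ∧
        (eCore v εstar).Nonempty := by
  classical
  have hne : Nonempty α := Fintype.card_pos_iff.mp (by omega)
  obtain ⟨a₀⟩ := hne
  set E := {ε : ℝ | (eCore v ε).Nonempty} with hEdef
  -- E is nonempty
  have hEne : E.Nonempty := by
    set β : α → ℝ := fun _ => v Finset.univ / (Fintype.card α : ℝ) with hβdef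
    have hn : (Fintype.card α : ℝ) ≠ 0 := Nat.cast_ne_zero.mpr (by omega)
    have hsum : ∑ a, β a = v Finset.univ := by
      rw [hβdef, Finset.sum_const, Finset.card_univ, nsmul_eq_mul]
      field_simp
    refine ⟨Finset.univ.powerset.sup' ⟨∅, by simp⟩ (fun C => v C - ∑ a ∈ C, β a),
      β, hsum, fun C hC hCne => ?_⟩
    have := Finset.le_sup' (f := fun C => v C - ∑ a ∈ C, β a)
      (Finset.mem_powerset.mpr (Finset.subset_univ C))
    linarith
  -- monotonicity of the core in ε
  have hmono : ∀ {ε ε' : ℝ}, ε ≤ ε' → eCore v ε ⊆ eCore v ε' := by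
    rintro ε ε' hle β ⟨h1, h2⟩
    exact ⟨h1, fun C hC hCne => by have := h2 C hC hCne; linarith⟩
  have hup : ∀ {ε ε' : ℝ}, ε ∈ E → ε ≤ ε' → ε' ∈ E := by
    rintro ε ε' ⟨β, hβ⟩ hle
    exact ⟨β, hmono hle hβ⟩
  -- coordinate bounds for elements of the core
  have hbd : ∀ (ε : ℝ) (β : α → ℝ), β ∈ eCore v ε → ∀ a : α,
      -ε ≤ β a ∧ β a ≤ ε + v Finset.univ - v (Finset.univ.erase a) := by
    rintro ε β ⟨h1, h2⟩ a
    have hsingne : ({a} : Finset α) ≠ Finset.univ := by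
      intro h
      have : Fintype.card α = 1 := by
        rw [← Finset.card_univ, ← h, Finset.card_singleton]
      omega
    have hsing := h2 {a} ⟨a, by simp⟩ hsingne
    have hv : v {a} = 0 := hzero _ (by simp)
    rw [Finset.sum_singleton, hv] at hsing
    have herase : (Finset.univ.erase a).Nonempty := by
      rw [← Finset.card_pos, Finset.card_erase_of_mem (Finset.mem_univ a),
        Finset.card_univ]
      omega
    have hne2 : Finset.univ.erase a ≠ Finset.univ := by
      intro h
      have := Finset.mem_univ a
      rw [← h] at this
      exact (Finset.notMem_erase a _) this
    have h3 := h2 _ herase hne2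
    have hsplit : β a + ∑ b ∈ Finset.univ.erase a, β b = ∑ b, β b :=
      Finset.add_sum_erase _ _ (Finset.mem_univ a)
    constructor
    · linarith
    · linarith
  -- E is bounded below
  have hbdd : BddBelow E := by
    refine ⟨(v (Finset.univ.erase a₀) - v Finset.univ) / 2, ?_⟩
    rintro ε ⟨β, hβ⟩
    obtain ⟨h1, h2⟩ := hbd ε β hβ a₀
    linarith
  -- the core is closed
  have hclosed : ∀ ε : ℝ, IsClosed (eCore v ε) := by
    intro ε
    have hsumcont : Continuous fun β : α → ℝ => ∑ a, β a :=
      continuous_finset_sum _ fun a _ => continuous_apply a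
    have : eCore v ε = {β : α → ℝ | ∑ a, β a = v Finset.univ} ∩
        ⋂ C : Finset α,
          {β : α → ℝ | C.Nonempty → C ≠ Finset.univ → v C - ε ≤ ∑ a ∈ C, β a} := by
      ext β
      simp only [eCore, Set.mem_setOf_eq, Set.mem_inter_iff, Set.mem_iInter]
    rw [this]
    refine IsClosed.inter (isClosed_eq hsumcont continuous_const) (isClosed_iInter ?_)
    intro C
    by_cases h1 : C.Nonempty
    · by_cases h2 : C = Finset.univ
      · have : {β : α → ℝ | C.Nonempty → C ≠ Finset.univ → v C - ε ≤ ∑ a ∈ C, β a}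
            = Set.univ := by
          ext β; simp [h2]
        rw [this]; exact isClosed_univ
      · have : {β : α → ℝ | C.Nonempty → C ≠ Finset.univ → v C - ε ≤ ∑ a ∈ C, β a}
            = {β : α → ℝ | v C - ε ≤ ∑ a ∈ C, β a} := by
          ext β; simp [h1, h2]
        rw [this]
        exact isClosed_le continuous_const
          (continuous_finset_sum _ fun a _ => continuous_apply a)
    · have : {β : α → ℝ | C.Nonempty → C ≠ Finset.univ → v C - ε ≤ ∑ a ∈ C, β a}
          = Set.univ := by
        ext β; simp [h1]
      rw [this]; exact isClosed_univ
  -- the infimum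
  set m := sInf E with hmdef
  -- the nested sequence of cores
  set t : ℕ → Set (α → ℝ) := fun n => eCore v (m + 1 / (n + 1)) with htdef
  have htpos : ∀ n : ℕ, (0 : ℝ) < 1 / (n + 1) := by
    intro n
    positivity
  have htmem : ∀ n : ℕ, (m + 1 / (n + 1)) ∈ E := by
    intro n
    have hlt : m < m + 1 / (n + 1) := by linarith [htpos n]
    obtain ⟨e, he, hle⟩ := exists_lt_of_csInf_lt hEne hlt
    exact hup he hle.le
  have htn : ∀ n, (t n).Nonempty := fun n => htmem n
  have htd : ∀ n, t (n + 1) ⊆ t n := by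
    intro n
    apply hmono
    have h1 : (1 : ℝ) / (n + 1 + 1) ≤ 1 / (n + 1) := by
      apply one_div_le_one_div_of_le
      · positivity
      · push_cast; linarith
    push_cast
    linarith
  have htcl : ∀ n, IsClosed (t n) := fun n => hclosed _
  -- t 0 is compact
  have ht0 : IsCompact (t 0) := by
    have hK : IsCompact (Set.pi Set.univ fun a : α =>
        Set.Icc (-(m + 1)) (m + 1 + v Finset.univ - v (Finset.univ.erase a))) :=
      isCompact_univ_pi fun a => isCompact_Icc
    apply hK.of_isClosed_subset (htcl 0)
    intro β hβ
    have hε : m + 1 / ((0 : ℕ) + 1) = m + 1 := by norm_num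
    rw [htdef] at hβ
    simp only [hε] at hβ
    intro a _
    obtain ⟨hlo, hhi⟩ := hbd (m + 1) β hβ a
    exact ⟨by linarith, by linarith⟩
  obtain ⟨β, hβ⟩ := IsCompact.nonempty_iInter_of_sequence_nonempty_isCompact_isClosed
    t htd htn ht0 htcl
  have hβn : ∀ n : ℕ, β ∈ eCore v (m + 1 / (n + 1)) := fun n => Set.mem_iInter.mp hβ n
  -- β is in the core at m
  have hβm : β ∈ eCore v m := by
    refine ⟨(hβn 0).1, fun C hC hCne => ?_⟩
    by_contra h
    push_neg at h
    set d := v C - m - ∑ a ∈ C, β a with hddef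
    have hd : 0 < d := by linarith
    obtain ⟨n, hn⟩ := exists_nat_gt (1 / d)
    have h2 := (hβn n).2 C hC hCne
    have h3 : d ≤ 1 / (n + 1) := by linarith
    have h4 : (1 : ℝ) / d < n + 1 := by linarith
    have h5 : 1 < d * (n + 1) := by
      rw [div_lt_iff₀ hd] at h4
      linarith
    have h6 : d * (n + 1) ≤ 1 := by
      rw [le_div_iff₀ (by positivity)] at h3
      linarith
    linarith
  exact ⟨hEne, hbdd, m, ⟨⟨β, hβm⟩, fun ε hε => csInf_le hbdd hε⟩, ⟨β, hβm⟩⟩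
end

section
/- Let A be a finite set of players, v a coalitional value function on A with v(C) = 0 whenever C has at most one element, F a family of nonempty proper subsets of A, ε^k ≥ 0, and β^c : A → ℝ a reference allocation. Suppose β^k : A → ℝ satisfies v(C) − Σ_{a∈C} β^k_a ≤ ε^k for every subset C ⊆ A, and β^k minimizes Σ_{a∈A} (β_a − β^c_a)² over all β with β ≥ 0 componentwise, Σ_{a∈A} β_a = v(A), and Σ_{a∈C} β_a ≥ v(C) − ε^k for all C ∈ F. Then β^k also minimizes Σ_{a∈A} (β_a − β^c_a)² over the full feasible set of all β with β ≥ 0 componentwise, Σ_{a∈A} β_a = v(A), and Σ_{a∈C} β_a ≥ v(C) − ε^k for every nonempty proper subset C ⊊ A. -/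
/-- Tie-breaking correctness of the constraint generation algorithm: if β^k
minimizes the squared distance to the reference allocation β^c over the
relaxed feasible set determined by the generated family F, and no coalition
has excess exceeding ε^k at β^k, then β^k also minimizes the squared distance
to β^c over the full feasible set (the nonnegative strong ε^k-core). -/
theorem stmt15 {α : Type*} [Fintype α] [DecidableEq α]
    (v : Finset α → ℝ)
    (hzero : ∀ C : Finset α, C.card ≤ 1 → v C = 0)
    (F : Set (Finset α))
    (hF : ∀ C ∈ F, C.Nonempty ∧ C ≠ Finset.univ)
    (εk : ℝ) (hεk : 0 ≤ εk)
    (βc βk : α → ℝ)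
    (hexc : ∀ C : Finset α, v C - ∑ a ∈ C, βk a ≤ εk)
    (hfeasR : (∀ a, 0 ≤ βk a) ∧ ∑ a, βk a = v Finset.univ ∧
      ∀ C ∈ F, v C - εk ≤ ∑ a ∈ C, βk a)
    (hoptR : ∀ β : α → ℝ,
      ((∀ a, 0 ≤ β a) ∧ ∑ a, β a = v Finset.univ ∧
        ∀ C ∈ F, v C - εk ≤ ∑ a ∈ C, β a) →
      ∑ a, (βk a - βc a) ^ 2 ≤ ∑ a, (β a - βc a) ^ 2) :
    ((∀ a, 0 ≤ βk a) ∧ ∑ a, βk a = v Finset.univ ∧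
      ∀ C : Finset α, C.Nonempty → C ≠ Finset.univ →
        v C - εk ≤ ∑ a ∈ C, βk a) ∧
    ∀ β : α → ℝ,
      ((∀ a, 0 ≤ β a) ∧ ∑ a, β a = v Finset.univ ∧
        ∀ C : Finset α, C.Nonempty → C ≠ Finset.univ →
          v C - εk ≤ ∑ a ∈ C, β a) →
      ∑ a, (βk a - βc a) ^ 2 ≤ ∑ a, (β a - βc a) ^ 2 := by
  obtain ⟨hnn, hsum, _⟩ := hfeasR
  refine ⟨⟨hnn, hsum, fun C _ _ => by linarith [hexc C]⟩, ?_⟩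
  rintro β ⟨hb, hs, hc⟩
  exact hoptR β ⟨hb, hs, fun C hC => hc C (hF C hC).1 (hF C hC).2⟩
end

section
/- Let A be a finite set of players and S a finite set of scenarios with probabilities π_s ≥ 0 summing to 1. For each s ∈ S let v^s be a coalitional value function on A, and define the expected coalitional value function v̄(C) = Σ_{s∈S} π_s v^s(C) for all C ⊆ A; assume v̄(A) ≠ 0. Let β : A → ℝ be efficient for v̄, i.e., Σ_{a∈A} β_a = v̄(A), and define the scenario-specific allocation β^s_a = (β_a / v̄(A)) · v^s(A). Then: (i) Σ_{a∈A} β^s_a = v^s(A) for every scenario s (budget balance in every scenario); (ii) Σ_{s∈S} π_s β^s_a = β_a for every player a (the expected scenario-specific benefit equals the original benefit); and (iii) if additionally β lies in the strong ε-core K(v̄, ε), then for every nonempty proper subset C ⊊ A the expected excess satisfies Σ_{s∈S} π_s (v^s(C) − Σ_{a∈C} β^s_a) ≤ ε. -/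
/-- Scenario-specific benefit allocations derived from an efficient allocation
for the expected coalitional value function: (i) budget balance in every
scenario, (ii) the expected scenario-specific benefit equals the original
benefit, and (iii) if the original allocation lies in the strong ε-core of the
expected game, the expected excess of every nonempty proper coalition is at
most ε. -/
theorem stmt16 {α σ : Type*} [Fintype α] [DecidableEq α] [Fintype σ]
    (π : σ → ℝ) (hπ : ∀ s, 0 ≤ π s) (hπ1 : ∑ s, π s = 1)
    (v : σ → Finset α → ℝ)
    (vbar : Finset α → ℝ)
    (hvbar : ∀ C : Finset α, vbar C = ∑ s, π s * v s C)
    (hvbarA : vbar Finset.univ ≠ 0)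
    (β : α → ℝ) (heff : ∑ a, β a = vbar Finset.univ)
    (βs : σ → α → ℝ)
    (hβs : ∀ s a, βs s a = β a / vbar Finset.univ * v s Finset.univ) :
    (∀ s, ∑ a, βs s a = v s Finset.univ) ∧
    (∀ a, ∑ s, π s * βs s a = β a) ∧
    (∀ ε : ℝ, β ∈ eCore vbar ε →
      ∀ C : Finset α, C.Nonempty → C ≠ Finset.univ →
        ∑ s, π s * (v s C - ∑ a ∈ C, βs s a) ≤ ε) := by
  have h2 : ∀ a, ∑ s, π s * βs s a = β a := by
    intro a
    have : ∑ s, π s * βs s a = β a / vbar Finset.univ * ∑ s, π s * v s Finset.univ := by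
      rw [Finset.mul_sum]
      exact Finset.sum_congr rfl fun s _ => by rw [hβs]; ring
    rw [this, ← hvbar, div_mul_cancel₀ _ hvbarA]
  refine ⟨?_, h2, ?_⟩
  · intro s
    have : ∑ a, βs s a = (∑ a, β a) / vbar Finset.univ * v s Finset.univ := by
      rw [Finset.sum_div, Finset.sum_mul]
      exact Finset.sum_congr rfl fun a _ => hβs s a
    rw [this, heff, div_self hvbarA, one_mul]
  · intro ε hcore C hC hCne
    have key : ∑ s, π s * (v s C - ∑ a ∈ C, βs s a) = vbar C - ∑ a ∈ C, β a := by
      have : ∑ s, π s * (v s C - ∑ a ∈ C, βs s a)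
          = (∑ s, π s * v s C) - ∑ s, ∑ a ∈ C, π s * βs s a := by
        rw [← Finset.sum_sub_distrib]
        exact Finset.sum_congr rfl fun s _ => by rw [mul_sub, Finset.mul_sum]
      rw [this, Finset.sum_comm, hvbar]
      congr 1
      exact Finset.sum_congr rfl fun a _ => h2 a
    rw [key]
    linarith [hcore.2 C hC hCne]
end

section
/- Let A be a finite set of players and v a coalitional value function on A. Suppose two players a, b ∈ A are symmetric, i.e., v(C ∪ {a}) = v(C ∪ {b}) for every subset C ⊆ A \ {a, b}, and suppose the strong ε-core K(v,ε) is nonempty for some ε ∈ ℝ. Then there exists an allocation β ∈ K(v,ε) with β_a = β_b. -/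
/-- If two players are symmetric and the strong ε-core is nonempty, then it
contains an allocation assigning them equal benefits. -/
theorem stmt18 {α : Type*} [Fintype α] [DecidableEq α]
    (v : Finset α → ℝ)
    (a b : α)
    (hsym : ∀ C : Finset α, a ∉ C → b ∉ C → v (insert a C) = v (insert b C))
    (ε : ℝ) (hne : (eCore v ε).Nonempty) :
    ∃ β ∈ eCore v ε, β a = β b := by
  obtain ⟨β, hsum, hcore⟩ := hne
  classical
  -- value is invariant under swapping a and b
  have hval : ∀ C : Finset α, v (C.image (Equiv.swap a b)) = v C := by
    intro C
    by_cases ha : a ∈ C <;> by_cases hb : b ∈ C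
    · have : C.image (Equiv.swap a b) = C := by
        ext x
        simp only [Finset.mem_image]
        constructor
        · rintro ⟨y, hy, rfl⟩
          rcases eq_or_ne y a with rfl | hya
          · simpa [Equiv.swap_apply_left]
          rcases eq_or_ne y b with rfl | hyb
          · simpa [Equiv.swap_apply_right]
          · simpa [Equiv.swap_apply_of_ne_of_ne hya hyb]
        · intro hx
          rcases eq_or_ne x a with rfl | hxa
          · exact ⟨b, hb, by simp [Equiv.swap_apply_right]⟩
          rcases eq_or_ne x b with rfl | hxb
          · exact ⟨a, ha, by simp [Equiv.swap_apply_left]⟩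
          · exact ⟨x, hx, by simp [Equiv.swap_apply_of_ne_of_ne hxa hxb]⟩
      rw [this]
    · -- a ∈ C, b ∉ C
      have hab : a ≠ b := by rintro rfl; exact hb ha
      have hC : C = insert a (C.erase a) := (Finset.insert_erase ha).symm
      have hna : a ∉ C.erase a := Finset.notMem_erase _ _
      have hnb : b ∉ C.erase a := fun h => hb (Finset.mem_of_mem_erase h)
      have himg : C.image (Equiv.swap a b) = insert b (C.erase a) := by
        conv_lhs => rw [hC]
        rw [Finset.image_insert, Equiv.swap_apply_left]
        congr 1
        ext x
        simp only [Finset.mem_image, Finset.mem_erase]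
        constructor
        · rintro ⟨y, ⟨hya, hyC⟩, rfl⟩
          rcases eq_or_ne y b with rfl | hyb
          · exact absurd hyC hb
          · simp [Equiv.swap_apply_of_ne_of_ne hya hyb, hya, hyC, hyb]
        · rintro ⟨hxa, hxC⟩
          have hxb : x ≠ b := fun h => hb (h ▸ hxC)
          exact ⟨x, ⟨hxa, hxC⟩, by simp [Equiv.swap_apply_of_ne_of_ne hxa hxb]⟩
      rw [himg, ← hsym _ hna hnb, ← hC]
    · -- b ∈ C, a ∉ C
      have hab : a ≠ b := by rintro rfl; exact ha hb
      have hC : C = insert b (C.erase b) := (Finset.insert_erase hb).symm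
      have hnb : b ∉ C.erase b := Finset.notMem_erase _ _
      have hna : a ∉ C.erase b := fun h => ha (Finset.mem_of_mem_erase h)
      have himg : C.image (Equiv.swap a b) = insert a (C.erase b) := by
        conv_lhs => rw [hC]
        rw [Finset.image_insert, Equiv.swap_apply_right]
        congr 1
        ext x
        simp only [Finset.mem_image, Finset.mem_erase]
        constructor
        · rintro ⟨y, ⟨hyb, hyC⟩, rfl⟩
          rcases eq_or_ne y a with rfl | hya
          · exact absurd hyC ha
          · simp [Equiv.swap_apply_of_ne_of_ne hya hyb, hya, hyC, hyb]
        · rintro ⟨hxb, hxC⟩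
          have hxa : x ≠ a := fun h => ha (h ▸ hxC)
          exact ⟨x, ⟨hxb, hxC⟩, by simp [Equiv.swap_apply_of_ne_of_ne hxa hxb]⟩
      rw [himg, hsym _ hna hnb, ← hC]
    · have : C.image (Equiv.swap a b) = C := by
        ext x
        simp only [Finset.mem_image]
        constructor
        · rintro ⟨y, hy, rfl⟩
          have hya : y ≠ a := fun h => ha (h ▸ hy)
          have hyb : y ≠ b := fun h => hb (h ▸ hy)
          simpa [Equiv.swap_apply_of_ne_of_ne hya hyb]
        · intro hx
          have hxa : x ≠ a := fun h => ha (h ▸ hx)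
          have hxb : x ≠ b := fun h => hb (h ▸ hx)
          exact ⟨x, hx, by simp [Equiv.swap_apply_of_ne_of_ne hxa hxb]⟩
      rw [this]
  -- sum of swapped β over C equals sum of β over image
  have hswapsum : ∀ C : Finset α,
      ∑ x ∈ C, β (Equiv.swap a b x) = ∑ x ∈ C.image (Equiv.swap a b), β x := by
    intro C
    rw [Finset.sum_image (fun x _ y _ h => (Equiv.swap a b).injective h)]
  refine ⟨fun x => (β x + β (Equiv.swap a b x)) / 2, ⟨?_, ?_⟩, ?_⟩
  · have h1 : ∑ x, β (Equiv.swap a b x) = ∑ x, β x :=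
      Equiv.sum_comp (Equiv.swap a b) β
    rw [← Finset.sum_div, Finset.sum_add_distrib, h1, hsum]
    ring
  · intro C hCne hCuniv
    have h1 : v C - ε ≤ ∑ x ∈ C, β x := hcore C hCne hCuniv
    have hCne' : (C.image (Equiv.swap a b)).Nonempty := hCne.image _
    have hCuniv' : C.image (Equiv.swap a b) ≠ Finset.univ := by
      intro h
      apply hCuniv
      have : (Finset.univ : Finset α).image (Equiv.swap a b) = Finset.univ :=
        Finset.image_univ_equiv _
      apply Finset.eq_univ_of_card
      have := Finset.card_image_of_injective C (Equiv.swap a b).injective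
      rw [← this, h, Finset.card_univ]
    have h2 : v C - ε ≤ ∑ x ∈ C, β (Equiv.swap a b x) := by
      rw [hswapsum]
      calc v C - ε = v (C.image (Equiv.swap a b)) - ε := by rw [hval]
        _ ≤ _ := hcore _ hCne' hCuniv'
    rw [← Finset.sum_div, Finset.sum_add_distrib]
    linarith
  · simp [Equiv.swap_apply_left, Equiv.swap_apply_right]
    ring
end
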